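/- The map (v,ξ) ↦ (A₀(v), A₁(ξ)) sends unit tangent vectors of S³ to pairs of nonzero vectors spanning an isotropic 2-plane in ℝ^{4,2}: if v, ξ ∈ S³ ⊂ ℝ⁴ with v·ξ = 0, then ⟨A₀(v), A₀(v)⟩ = ⟨A₁(ξ), A₁(ξ)⟩ = ⟨A₀(v), A₁(ξ)⟩ = 0, and A₀(v), A₁(ξ) are linearly independent. -/

import Mathlib

/-- The Lie sphere bilinear form on ℝ⁶. -/
def Bform (x y : Fin 6 → ℝ) : ℝ :=
  -(x 0 * y 5 + x 5 * y 0) - (x 1 * y 4 + x 4 * y 1) + x 2 * y 2 + x 3 * y 3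

/-- A₀(v) for v ∈ S³ ⊂ ℝ⁴. -/
noncomputable def A0 (v : Fin 4 → ℝ) : Fin 6 → ℝ :=
  ![(1 - v 0) / 2, -(v 1) / 2, v 2 / Real.sqrt 2, v 3 / Real.sqrt 2,
    v 1 / 2, (1 + v 0) / 2]

/-- A₁(ξ) for ξ ∈ S³ ⊂ ℝ⁴. -/
noncomputable def A1 (ξ : Fin 4 → ℝ) : Fin 6 → ℝ :=
  ![-(ξ 0) / 2, (1 - ξ 1) / 2, ξ 2 / Real.sqrt 2, ξ 3 / Real.sqrt 2,
    (1 + ξ 1) / 2, ξ 0 / 2]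

/-- If v, ξ ∈ S³ with v·ξ = 0, then A₀(v), A₁(ξ) span an isotropic 2-plane:
they are isotropic, mutually orthogonal for ⟨,⟩, and linearly independent. -/
theorem stmt8 (v ξ : Fin 4 → ℝ)
    (hv : ∑ i, v i * v i = 1) (hξ : ∑ i, ξ i * ξ i = 1)
    (hvξ : ∑ i, v i * ξ i = 0) :
    Bform (A0 v) (A0 v) = 0 ∧ Bform (A1 ξ) (A1 ξ) = 0 ∧
    Bform (A0 v) (A1 ξ) = 0 ∧ LinearIndependent ℝ ![A0 v, A1 ξ] := by
  have h2 : Real.sqrt 2 * Real.sqrt 2 = 2 := Real.mul_self_sqrt (by norm_num)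
  have h2ne : Real.sqrt 2 ≠ 0 := by positivity
  simp only [Fin.sum_univ_four] at hv hξ hvξ
  refine ⟨?_, ?_, ?_, ?_⟩
  · simp only [Bform, A0]
    simp only [show (5:Fin 6) = Fin.succ 4 from rfl, Matrix.cons_val_succ,
      Matrix.cons_val_zero, Matrix.cons_val_one, Matrix.head_cons,
      Matrix.cons_val_four, Matrix.vecHead, Matrix.vecTail, Function.comp,
      Matrix.cons_val_two, Matrix.cons_val_three]
    field_simp
    nlinarith [hv]
  · simp only [Bform, A1]
    simp only [show (5:Fin 6) = Fin.succ 4 from rfl, Matrix.cons_val_succ,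
      Matrix.cons_val_zero, Matrix.cons_val_one, Matrix.head_cons,
      Matrix.cons_val_four, Matrix.vecHead, Matrix.vecTail, Function.comp,
      Matrix.cons_val_two, Matrix.cons_val_three]
    field_simp
    nlinarith [hξ]
  · simp only [Bform, A0, A1]
    simp only [show (5:Fin 6) = Fin.succ 4 from rfl, Matrix.cons_val_succ,
      Matrix.cons_val_zero, Matrix.cons_val_one, Matrix.head_cons,
      Matrix.cons_val_four, Matrix.vecHead, Matrix.vecTail, Function.comp,
      Matrix.cons_val_two, Matrix.cons_val_three]
    field_simp
    rw [Real.sq_sqrt (by norm_num : (0:ℝ) ≤ 2)]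
    nlinarith [hvξ]
  · rw [LinearIndependent.pair_iff]
    intro s t h
    have h0 := congrFun h 0
    have h5 := congrFun h 5
    have h1 := congrFun h 1
    have h4 := congrFun h 4
    simp only [A0, A1, Pi.add_apply, Pi.smul_apply, smul_eq_mul, Pi.zero_apply,
      show (5:Fin 6) = Fin.succ 4 from rfl, Matrix.cons_val_succ,
      Matrix.cons_val_zero, Matrix.cons_val_one, Matrix.head_cons,
      Matrix.cons_val_four, Matrix.vecHead, Matrix.vecTail, Function.comp] at h0 h1 h4 h5
    constructor <;> linarith
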